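/- arXiv:1806.02383 — 2 statements merged into one kernel-verified Lean document; each statement's English description precedes it below -/
import Mathlib

section
/- Let a > 1, b ∈ ℝ, C₁, C₂ ≥ 0, and D₁, D₂ ∈ ℝ satisfy D₁ − (a−1)b < −1 and D₂ < −1. Then there exists Λ > 0 such that for every Z₀ with 0 < Z₀ < Λ, the ODE initial-value problem Z'(t) + (b/(1+t)) Z(t) = C₁ (1+t)^{D₁} Z(t)^a + C₂ (1+t)^{D₂} Z(t), Z(0) = Z₀, admits a global solution Z : [0,∞) → ℝ with Z(t) > 0 for all t ≥ 0. -/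
open Real MeasureTheory intervalIntegral Set

theorem stmt_3 (a b C₁ C₂ D₁ D₂ : ℝ) (ha : 1 < a) (hC₁ : 0 ≤ C₁) (hC₂ : 0 ≤ C₂)
    (hD₁ : D₁ - (a - 1) * b < -1) (hD₂ : D₂ < -1) :
    ∃ Λ > (0:ℝ), ∀ Z₀ : ℝ, 0 < Z₀ → Z₀ < Λ →
      ∃ Z : ℝ → ℝ, Z 0 = Z₀ ∧ (∀ t ≥ (0:ℝ), 0 < Z t) ∧
        ∀ t ≥ (0:ℝ), HasDerivAt Z
          (-(b / (1 + t)) * Z t + C₁ * (1 + t) ^ D₁ * Z t ^ a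
            + C₂ * (1 + t) ^ D₂ * Z t) t := by
  have ha1 : (0:ℝ) < a - 1 := by linarith
  have ha1' : a - 1 ≠ 0 := ne_of_gt ha1
  set d : ℝ := D₂ + 1 with hd
  have hdneg : d < 0 := by simp only [hd]; linarith
  have hdne : d ≠ 0 := ne_of_lt hdneg
  set c : ℝ := D₁ - (a - 1) * b with hc
  have hcneg : c + 1 < 0 := by simp only [hc]; linarith
  set k : ℝ := (a - 1) * C₂ with hk
  have hknn : 0 ≤ k := by rw [hk]; positivity
  set e : ℝ := -((a - 1) * b) with he
  clear_value d c k e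
  set M : ℝ := Real.exp (k / (-d)) with hM
  have hMpos : 0 < M := Real.exp_pos _
  set K : ℝ := M / (-(c + 1)) with hK
  have hKpos : 0 < K := div_pos hMpos (by linarith)
  clear_value M K
  have hbase : (0:ℝ) < (a - 1) * C₁ * K + 1 := by positivity
  refine ⟨((a - 1) * C₁ * K + 1) ^ (-(a - 1)⁻¹), Real.rpow_pos_of_pos hbase _, ?_⟩
  intro Z₀ hZ₀ hZ₀Λ
  -- smallness: Z₀ ^ (1 - a) > (a-1) C₁ K + 1
  have hW0 : (a - 1) * C₁ * K + 1 < Z₀ ^ (1 - a) := by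
    have h1 := Real.rpow_lt_rpow_of_neg hZ₀ hZ₀Λ (by linarith : 1 - a < 0)
    have h2 : (((a - 1) * C₁ * K + 1) ^ (-(a - 1)⁻¹)) ^ (1 - a)
        = (a - 1) * C₁ * K + 1 := by
      rw [← Real.rpow_mul hbase.le]
      rw [show -(a - 1)⁻¹ * (1 - a) = (a - 1)⁻¹ * (a - 1) by ring,
        inv_mul_cancel₀ ha1', Real.rpow_one]
    rw [h2] at h1; exact h1
  -- the integrating factor
  set μ : ℝ → ℝ := fun t => (1 + t) ^ e * Real.exp (k * (((1 + t) ^ d - 1) / d)) with hμ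
  set F : ℝ → ℝ := fun s => (1 + s) ^ D₁ * μ s with hF
  set J : ℝ → ℝ := fun t => ∫ s in (0:ℝ)..t, F s with hJ
  set G : ℝ → ℝ := fun t => Z₀ ^ (1 - a) - (a - 1) * C₁ * J t with hG
  have hμpos : ∀ t : ℝ, -1 < t → 0 < μ t := fun t ht => by
    have h1 : (0:ℝ) < 1 + t := by linarith
    rw [hμ]
    positivity
  have hFcont : ∀ s ∈ Ioi (-1:ℝ), ContinuousAt F s := by
    intro s hs
    have h1 : (0:ℝ) < 1 + s := by simpa using neg_lt_iff_pos_add'.mp hs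
    have hc1 : ContinuousAt (fun s : ℝ => 1 + s) s := by fun_prop
    have hr : ∀ y : ℝ, ContinuousAt (fun s : ℝ => (1 + s) ^ y) s := fun y =>
      hc1.rpow_const (Or.inl h1.ne')
    rw [hF, hμ]
    exact ((hr D₁).mul ((hr e).mul
      (Real.continuous_exp.continuousAt.comp
        ((((hr d).sub continuousAt_const).div_const d).const_mul k))))
  have hFcontOn : ContinuousOn F (Ioi (-1:ℝ)) :=
    continuousOn_of_forall_continuousAt hFcont
  have hFint : ∀ t : ℝ, 0 ≤ t → IntervalIntegrable F volume 0 t := by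
    intro t ht
    apply (hFcontOn.mono ?_).intervalIntegrable
    intro x hx
    rw [Set.uIcc_of_le ht] at hx
    simp only [mem_Ioi]
    linarith [hx.1]
  have hJderiv : ∀ t : ℝ, 0 ≤ t → HasDerivAt J (F t) t := by
    intro t ht
    have ht1 : t ∈ Ioi (-1:ℝ) := by simp only [mem_Ioi]; linarith
    rw [hJ]
    exact intervalIntegral.integral_hasDerivAt_right (hFint t ht)
      (ContinuousAt.stronglyMeasurableAtFilter isOpen_Ioi hFcont t ht1)
      (hFcont t ht1)
  -- bound on J
  have hFbound : ∀ s : ℝ, 0 ≤ s → F s ≤ M * (1 + s) ^ c := by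
    intro s hs
    have h1 : (1:ℝ) ≤ 1 + s := by linarith
    have h1' : (0:ℝ) < 1 + s := by linarith
    have hexp : Real.exp (k * (((1 + s) ^ d - 1) / d)) ≤ M := by
      rw [hM]
      apply Real.exp_le_exp.mpr
      have hle1 : (1 + s) ^ d ≤ 1 := Real.rpow_le_one_of_one_le_of_nonpos h1 hdneg.le
      have hpos : (0:ℝ) < (1 + s) ^ d := Real.rpow_pos_of_pos h1' d
      rw [show ((1 + s) ^ d - 1) / d = (1 - (1 + s) ^ d) * (-d)⁻¹ by
        rw [inv_neg, mul_neg, ← neg_mul, neg_sub, div_eq_mul_inv], div_eq_mul_inv k (-d)]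
      have hinv : (0:ℝ) ≤ (-d)⁻¹ := by rw [inv_nonneg]; linarith
      nlinarith [mul_nonneg (mul_nonneg hknn hinv) hpos.le]
    have hceq : (1 + s) ^ D₁ * (1 + s) ^ e = (1 + s) ^ c := by
      rw [← Real.rpow_add h1', hc, he]; ring_nf
    calc F s = (1 + s) ^ c * Real.exp (k * (((1 + s) ^ d - 1) / d)) := by
          rw [hF, hμ]; simp only [← mul_assoc, hceq]
      _ ≤ (1 + s) ^ c * M :=
          mul_le_mul_of_nonneg_left hexp (Real.rpow_pos_of_pos h1' c).le
      _ = M * (1 + s) ^ c := mul_comm _ _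
  have hJbound : ∀ t : ℝ, 0 ≤ t → J t ≤ K := by
    intro t ht
    have hint2 : IntervalIntegrable (fun s => M * (1 + s) ^ c) volume 0 t := by
      apply ContinuousOn.intervalIntegrable
      intro x hx
      rw [Set.uIcc_of_le ht] at hx
      have hx1 : (0:ℝ) < 1 + x := by linarith [hx.1]
      exact (continuousAt_const.mul
        ((by fun_prop : ContinuousAt (fun s : ℝ => 1 + s) x).rpow_const
          (Or.inl hx1.ne'))).continuousWithinAt
    have hmono : J t ≤ ∫ s in (0:ℝ)..t, M * (1 + s) ^ c := by
      rw [hJ]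
      apply intervalIntegral.integral_mono_on ht (hFint t ht) hint2
      intro x hx
      exact hFbound x hx.1
    have hcomp : (∫ s in (0:ℝ)..t, (1 + s) ^ c)
        = ((1 + t) ^ (c + 1) - 1) / (c + 1) := by
      rw [intervalIntegral.integral_comp_add_left (fun u : ℝ => u ^ c) 1]
      rw [show (1:ℝ) + 0 = 1 by norm_num]
      rw [integral_rpow (Or.inr ⟨by intro h; rw [h] at hcneg; norm_num at hcneg, by
        rw [Set.uIcc_of_le (by linarith : (1:ℝ) ≤ 1 + t)]
        intro hmem; have := hmem.1; linarith⟩)]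
      rw [Real.one_rpow]
    have hp : (0:ℝ) < (1 + t) ^ (c + 1) := Real.rpow_pos_of_pos (by linarith) _
    have hval : M * (((1 + t) ^ (c + 1) - 1) / (c + 1)) ≤ K := by
      rw [hK, show ((1 + t) ^ (c + 1) - 1) / (c + 1)
          = (1 - (1 + t) ^ (c + 1)) * (-(c + 1))⁻¹ by
        rw [inv_neg, mul_neg, ← neg_mul, neg_sub, div_eq_mul_inv], div_eq_mul_inv M (-(c + 1))]
      have hinv : (0:ℝ) ≤ (-(c + 1))⁻¹ := by rw [inv_nonneg]; linarith
      nlinarith [mul_nonneg (mul_nonneg hMpos.le hinv) hp.le]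
    calc J t ≤ ∫ s in (0:ℝ)..t, M * (1 + s) ^ c := hmono
      _ = M * ∫ s in (0:ℝ)..t, (1 + s) ^ c := intervalIntegral.integral_const_mul _ _
      _ = M * (((1 + t) ^ (c + 1) - 1) / (c + 1)) := by rw [hcomp]
      _ ≤ K := hval
  have hGpos : ∀ t : ℝ, 0 ≤ t → 1 ≤ G t := by
    intro t ht
    have h1 : (a - 1) * C₁ * J t ≤ (a - 1) * C₁ * K :=
      mul_le_mul_of_nonneg_left (hJbound t ht) (by positivity)
    rw [hG]; simp only; linarith
  set W : ℝ → ℝ := fun t => G t / μ t with hW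
  have hWpos : ∀ t : ℝ, 0 ≤ t → 0 < W t := by
    intro t ht
    rw [hW]
    exact div_pos (by linarith [hGpos t ht]) (hμpos t (by linarith))
  clear_value μ F J G W
  refine ⟨fun t => W t ^ (-(a - 1)⁻¹), ?_, ?_, ?_⟩
  · -- initial value
    have hJ0 : J 0 = 0 := by rw [hJ]; simp
    have hμ0 : μ 0 = 1 := by rw [hμ]; norm_num
    have hW0' : W 0 = Z₀ ^ (1 - a) := by rw [hW]; simp [hG, hJ0, hμ0]
    show W 0 ^ (-(a - 1)⁻¹) = Z₀
    rw [hW0', ← Real.rpow_mul hZ₀.le,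
      show (1 - a) * -(a - 1)⁻¹ = (a - 1) * (a - 1)⁻¹ by ring,
      mul_inv_cancel₀ ha1', Real.rpow_one]
  · intro t ht
    exact Real.rpow_pos_of_pos (hWpos t ht) _
  · intro t ht
    have hP : (0:ℝ) < 1 + t := by linarith
    have hPne : (1:ℝ) + t ≠ 0 := hP.ne'
    have h1 : HasDerivAt (fun t : ℝ => 1 + t) 1 t := by
      simpa using (hasDerivAt_id t).const_add 1
    have hμt : 0 < μ t := hμpos t (by linarith)
    have hWt : 0 < W t := hWpos t ht
    have hμderiv : HasDerivAt μ (μ t * (e / (1 + t) + k * (1 + t) ^ (d - 1))) t := by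
      rw [hμ]
      have hA : HasDerivAt (fun t : ℝ => (1 + t) ^ e) (1 * e * (1 + t) ^ (e - 1)) t :=
        h1.rpow_const (Or.inl hPne)
      have hB : HasDerivAt (fun t : ℝ => (1 + t) ^ d) (1 * d * (1 + t) ^ (d - 1)) t :=
        h1.rpow_const (Or.inl hPne)
      have hI : HasDerivAt (fun t : ℝ => k * (((1 + t) ^ d - 1) / d))
          (k * ((1 * d * (1 + t) ^ (d - 1)) / d)) t :=
        ((hB.sub_const 1).div_const d).const_mul k
      convert hA.mul hI.exp using 1
      case e'_4 => rfl
      case e'_5 => rfl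
      case e'_8 => rfl
      rw [show (1 + t) ^ (e - 1) = (1 + t) ^ e / (1 + t) by
        rw [Real.rpow_sub hP, Real.rpow_one]]
      field_simp
    have hGderiv : HasDerivAt G (-((a - 1) * C₁ * F t)) t := by
      rw [hG]
      exact ((hJderiv t ht).const_mul ((a - 1) * C₁)).const_sub _
    have hWderiv : HasDerivAt W
        ((-((a - 1) * C₁ * F t) * μ t
          - G t * (μ t * (e / (1 + t) + k * (1 + t) ^ (d - 1)))) / μ t ^ 2) t := by
      rw [hW]
      exact hGderiv.div hμderiv hμt.ne'
    have hZderiv := hWderiv.rpow_const (p := -(a - 1)⁻¹) (Or.inl hWt.ne')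
    convert hZderiv using 1
    -- algebraic identity
    have hpow_a : (W t ^ (-(a - 1)⁻¹)) ^ a = W t ^ (-(a - 1)⁻¹ - 1) := by
      rw [← Real.rpow_mul hWt.le]
      congr 1
      field_simp
      ring
    have hsplit := Real.rpow_add hWt 1 (-(a - 1)⁻¹ - 1)
    rw [show (1 + (-(a - 1)⁻¹ - 1)) = -(a - 1)⁻¹ by ring, Real.rpow_one] at hsplit
    beta_reduce
    rw [hpow_a, hsplit, hF, show d - 1 = D₂ by rw [hd]; ring, he, hk]
    have hWeq : W t = G t / μ t := by rw [hW]
    rw [hWeq]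
    field_simp
    ring
end

section
/- Let b > 1, ε > 0, C₀ ≥ 0, C ≥ 0 with 1 + ε − 2b < −1, and let Z : [0,T) → ℝ be positive and differentiable with Z' + (b/(1+t)) Z ≤ C (1+t)^{1+ε} Z³ + C₀ (1+t)^{−1−ε} Z and Z(0) = Z₀. If Z₀² · 2C ∫₀^∞ (1+s)^{1+ε−2b} exp( (2C₀/ε)(1 − (1+s)^{-ε}) ) ds < 1, then Z(t) ≤ K (1+t)^{-b} for all t ∈ [0,T), where K depends only on Z₀, C, C₀, b, ε. -/
open MeasureTheory intervalIntegral Set Real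

theorem stmt_19 (b ε C₀ C Z₀ : ℝ) (hb : 1 < b) (hε : 0 < ε)
    (hC₀ : 0 ≤ C₀) (hC : 0 ≤ C) (hexp : 1 + ε - 2 * b < -1)
    (hsmall : Z₀ ^ 2 * (2 * C * ∫ s in Set.Ioi (0:ℝ),
        (1 + s) ^ (1 + ε - 2 * b)
          * Real.exp ((2 * C₀ / ε) * (1 - (1 + s) ^ (-ε)))) < 1) :
    ∃ K : ℝ, ∀ (T : ℝ) (Z Z' : ℝ → ℝ),
      (∀ t ∈ Set.Ico (0:ℝ) T, HasDerivAt Z (Z' t) t) →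
      (∀ t ∈ Set.Ico (0:ℝ) T, 0 < Z t) →
      Z 0 = Z₀ →
      (∀ t ∈ Set.Ico (0:ℝ) T,
        Z' t + (b / (1 + t)) * Z t
          ≤ C * (1 + t) ^ (1 + ε) * Z t ^ 3 + C₀ * (1 + t) ^ (-1 - ε) * Z t) →
      ∀ t ∈ Set.Ico (0:ℝ) T, Z t ≤ K * (1 + t) ^ (-b) := by
  by_cases hZ₀ : 0 < Z₀
  swap
  · -- vacuous case: hypotheses force Z 0 = Z₀ > 0
    refine ⟨0, fun T Z Z' hZd hZpos hZ0 hZineq t ht => absurd ?_ hZ₀⟩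
    have h0 : (0:ℝ) ∈ Set.Ico (0:ℝ) T := ⟨le_refl _, lt_of_le_of_lt ht.1 ht.2⟩
    rw [← hZ0]; exact hZpos 0 h0
  set c : ℝ := 2 * C₀ / ε with hc
  have hcnn : 0 ≤ c := by positivity
  set h : ℝ → ℝ := fun s => (1 + s) ^ (1 + ε - 2 * b) * Real.exp (c * (1 - (1 + s) ^ (-ε)))
    with hh
  set I : ℝ := ∫ s in Set.Ioi (0:ℝ), h s with hI
  -- continuity of h at nonneg points (indeed on Ioi (-1))
  have hcont : ∀ s ∈ Set.Ioi (-1:ℝ), ContinuousAt h s := by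
    intro s hs
    have h1 : (1:ℝ) + s ≠ 0 := by simp only [Set.mem_Ioi] at hs; intro hcon; linarith
    have hlin : ContinuousAt (fun t : ℝ => 1 + t) s := by fun_prop
    have c1 : ContinuousAt (fun t : ℝ => (1 + t) ^ (1 + ε - 2 * b)) s :=
      (Real.continuousAt_rpow_const _ _ (Or.inl h1)).comp hlin
    have c2 : ContinuousAt (fun t : ℝ => (1 + t) ^ (-ε)) s :=
      (Real.continuousAt_rpow_const _ _ (Or.inl h1)).comp hlin
    exact c1.mul (Real.continuous_exp.continuousAt.comp
      (continuousAt_const.mul (continuousAt_const.sub c2)))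
  have hcontOn : ∀ A : Set ℝ, A ⊆ Set.Ioi (-1:ℝ) → ContinuousOn h A := by
    intro A hA x hx
    exact (hcont x (hA hx)).continuousWithinAt
  have hnonneg : ∀ s : ℝ, 0 ≤ s → 0 ≤ h s := by
    intro s hs
    have : (0:ℝ) ≤ 1 + s := by linarith
    exact mul_nonneg (Real.rpow_nonneg this _) (Real.exp_nonneg _)
  -- integrability of h on Ioi 0
  have hInt : IntegrableOn h (Set.Ioi (0:ℝ)) := by
    have hpart1 : IntegrableOn h (Set.Ioc (0:ℝ) 1) := by
      have : IntegrableOn h (Set.Icc (0:ℝ) 1) := by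
        refine (hcontOn _ ?_).integrableOn_Icc
        intro x hx
        exact Set.mem_Ioi.mpr (by linarith [hx.1])
      exact this.mono_set Set.Ioc_subset_Icc_self
    have hpart2 : IntegrableOn h (Set.Ioi (1:ℝ)) := by
      have hg : IntegrableOn (fun s : ℝ => Real.exp c * s ^ (1 + ε - 2 * b))
          (Set.Ioi (1:ℝ)) :=
        (integrableOn_Ioi_rpow_of_lt hexp one_pos).const_mul _
      refine hg.mono' ((hcontOn _ (fun x hx =>
          Set.mem_Ioi.mpr (by linarith [Set.mem_Ioi.mp hx]))).aestronglyMeasurable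
          measurableSet_Ioi) ?_
      rw [ae_restrict_iff' measurableSet_Ioi]
      refine Filter.Eventually.of_forall fun s hs => ?_
      simp only [Set.mem_Ioi] at hs
      have hs0 : (0:ℝ) < s := by linarith
      have h1s : (0:ℝ) < 1 + s := by linarith
      rw [Real.norm_eq_abs, abs_of_nonneg (hnonneg s hs0.le)]
      have e1 : (1 + s) ^ (1 + ε - 2 * b) ≤ s ^ (1 + ε - 2 * b) := by
        apply Real.rpow_le_rpow_of_nonpos hs0 (by linarith) (by linarith)
      have e2 : Real.exp (c * (1 - (1 + s) ^ (-ε))) ≤ Real.exp c := by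
        apply Real.exp_le_exp.mpr
        have : (0:ℝ) ≤ (1 + s) ^ (-ε) := Real.rpow_nonneg h1s.le _
        nlinarith
      calc h s ≤ s ^ (1 + ε - 2 * b) * Real.exp c := by
            apply mul_le_mul e1 e2 (Real.exp_nonneg _) (Real.rpow_nonneg hs0.le _)
        _ = Real.exp c * s ^ (1 + ε - 2 * b) := mul_comm _ _
    have := hpart1.union hpart2
    rwa [Set.Ioc_union_Ioi_eq_Ioi zero_le_one] at this
  have hI0 : 0 ≤ I := by
    rw [hI]
    apply setIntegral_nonneg measurableSet_Ioi
    intro s hs; exact hnonneg s (le_of_lt hs)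
  -- δ and K
  have hZsq : (0:ℝ) < Z₀ ^ 2 := by positivity
  have hδ0 : 2 * C * I < (Z₀ ^ 2)⁻¹ := by
    have h1 : (Z₀ ^ 2)⁻¹ * (Z₀ ^ 2) = 1 := inv_mul_cancel₀ (ne_of_gt hZsq)
    nlinarith [mul_pos (inv_pos.mpr hZsq) hZsq]
  set δ : ℝ := (Z₀ ^ 2)⁻¹ - 2 * C * I with hδ
  have hδpos : 0 < δ := by rw [hδ]; linarith
  refine ⟨Real.sqrt (Real.exp c / δ), fun T Z Z' hZd hZpos hZ0 hZineq t ht => ?_⟩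
  have htT : t < T := ht.2
  have ht0 : 0 ≤ t := ht.1
  -- auxiliary functions
  set μ : ℝ → ℝ := fun r => (1 + r) ^ (-(2 * b)) * Real.exp (c * (1 - (1 + r) ^ (-ε))) with hμdef
  set G : ℝ → ℝ := fun r => ∫ x in (0:ℝ)..r, 2 * C * h x with hGdef
  set F : ℝ → ℝ := fun r => ((Z r) ^ 2)⁻¹ * μ r + G r with hFdef
  -- key derivative fact
  have key : ∀ s ∈ Set.Ico (0:ℝ) T, ∃ d, HasDerivAt F d s ∧ 0 ≤ d := by
    intro s hs
    have hu : (0:ℝ) < 1 + s := by linarith [hs.1]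
    have hune : (1:ℝ) + s ≠ 0 := ne_of_gt hu
    have hz : 0 < Z s := hZpos s hs
    have hzd := hZd s hs
    have hlin : HasDerivAt (fun r : ℝ => 1 + r) 1 s := by
      simpa using (hasDerivAt_id s).const_add 1
    have hA : HasDerivAt (fun r : ℝ => (1 + r) ^ (-(2 * b)))
        (-(2 * b) * (1 + s) ^ (-(2 * b) - 1)) s := by
      have := (Real.hasDerivAt_rpow_const (p := -(2 * b)) (Or.inl hune)).comp s hlin
      simpa [Function.comp_def] using this
    have hE : HasDerivAt (fun r : ℝ => (1 + r) ^ (-ε)) (-ε * (1 + s) ^ (-ε - 1)) s := by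
      have := (Real.hasDerivAt_rpow_const (p := -ε) (Or.inl hune)).comp s hlin
      simpa [Function.comp_def] using this
    have hBin : HasDerivAt (fun r : ℝ => c * (1 - (1 + r) ^ (-ε)))
        (c * (ε * (1 + s) ^ (-ε - 1))) s := by
      have := ((hasDerivAt_const s (1:ℝ)).sub hE).const_mul c
      simpa [mul_comm, mul_left_comm, mul_assoc] using this
    have hB : HasDerivAt (fun r : ℝ => Real.exp (c * (1 - (1 + r) ^ (-ε))))
        (Real.exp (c * (1 - (1 + s) ^ (-ε))) * (c * (ε * (1 + s) ^ (-ε - 1)))) s := hBin.exp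
    have hμd : HasDerivAt μ
        (-(2 * b) * (1 + s) ^ (-(2 * b) - 1) * Real.exp (c * (1 - (1 + s) ^ (-ε)))
          + (1 + s) ^ (-(2 * b)) *
            (Real.exp (c * (1 - (1 + s) ^ (-ε))) * (c * (ε * (1 + s) ^ (-ε - 1))))) s :=
      hA.mul hB
    have hy : HasDerivAt (fun r => ((Z r) ^ 2)⁻¹)
        (-(2 * Z s ^ 1 * Z' s) / ((Z s) ^ 2) ^ 2) s :=
      (hzd.pow 2).inv (pow_ne_zero 2 hz.ne')
    have hG' : HasDerivAt G (2 * C * h s) s := by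
      apply intervalIntegral.integral_hasDerivAt_right
      · apply ContinuousOn.intervalIntegrable
        apply continuous_const.continuousOn.mul (hcontOn _ ?_)
        intro x hx
        rw [Set.uIcc_of_le hs.1] at hx
        exact Set.mem_Ioi.mpr (by linarith [hx.1])
      · exact (continuous_const.continuousOn.mul
          (hcontOn (Set.Ioi (-1)) (fun x hx => hx))).stronglyMeasurableAtFilter
          isOpen_Ioi _ (Set.mem_Ioi.mpr (by linarith [hs.1]))
      · exact continuousAt_const.mul (hcont s (Set.mem_Ioi.mpr (by linarith [hs.1])))
    refine ⟨_, (hy.mul hμd).add hG', ?_⟩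
    -- nonnegativity of the derivative
    have hz5 := hZineq s hs
    have hcε : c * ε = 2 * C₀ := by rw [hc]; field_simp
    have hr1 : (1 + s) ^ (-(2 * b) - 1) = (1 + s) ^ (-(2 * b)) / (1 + s) :=
      Real.rpow_sub_one hune _
    have hr2 : (1 + s) ^ (-ε - 1) = (1 + s) ^ (-ε) / (1 + s) := Real.rpow_sub_one hune _
    have hr3 : h s = (1 + s) ^ (1 + ε) * (1 + s) ^ (-(2 * b)) *
        Real.exp (c * (1 - (1 + s) ^ (-ε))) := by
      rw [hh]
      simp only []
      rw [show (1:ℝ) + ε - 2 * b = (1 + ε) + -(2 * b) by ring, Real.rpow_add hu]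
    have hr4 : (1 + s) ^ (-1 - ε : ℝ) = (1 + s) ^ (-ε) / (1 + s) := by
      rw [show (-1 : ℝ) - ε = -ε - 1 by ring]; exact Real.rpow_sub_one hune _
    rw [hr4] at hz5
    rw [hr1, hr2, hr3]
    set u : ℝ := 1 + s
    set P : ℝ := u ^ (-(2 * b)) with hP
    set V : ℝ := u ^ (-ε) with hV
    set W : ℝ := u ^ (1 + ε) with hW
    set B : ℝ := Real.exp (c * (1 - V)) with hB2
    have hPpos : 0 < P := Real.rpow_pos_of_pos hu _
    have hVpos : 0 < V := Real.rpow_pos_of_pos hu _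
    have hWpos : 0 < W := Real.rpow_pos_of_pos hu _
    have hBpos : 0 < B := Real.exp_pos _
    have hzne : Z s ≠ 0 := ne_of_gt hz
    have hC₀' : C₀ = c * ε / 2 := by rw [hc]; field_simp
    have hz5' : Z' s ≤ C * W * Z s ^ 3 + c * ε / 2 * (V / u) * Z s - b / u * Z s := by
      rw [← hC₀']; linarith
    have hfact : -(2 * Z s ^ 1 * Z' s) / ((Z s) ^ 2) ^ 2 *
          (P * B) + ((Z s) ^ 2)⁻¹ *
          (-(2 * b) * (P / u) * B + P * (B * (c * (ε * (V / u)))))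
          + 2 * C * (W * P * B)
        = 2 * P * B / Z s ^ 3 *
          ((C * W * Z s ^ 3 + c * ε / 2 * (V / u) * Z s - b / u * Z s) - Z' s) := by
      field_simp
      ring
    rw [hfact]
    apply mul_nonneg
    · positivity
    · linarith
  -- F is monotone on [0, t]
  have hssub : Set.Icc (0:ℝ) t ⊆ Set.Ico (0:ℝ) T := fun x hx =>
    ⟨hx.1, lt_of_le_of_lt hx.2 htT⟩
  have hmono : MonotoneOn F (Set.Icc (0:ℝ) t) := by
    apply monotoneOn_of_deriv_nonneg (convex_Icc 0 t)
    · intro x hx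
      obtain ⟨d, hd, _⟩ := key x (hssub hx)
      exact hd.continuousAt.continuousWithinAt
    · intro x hx
      rw [interior_Icc] at hx
      obtain ⟨d, hd, _⟩ := key x (hssub (Set.Ioo_subset_Icc_self hx))
      exact hd.differentiableAt.differentiableWithinAt
    · intro x hx
      rw [interior_Icc] at hx
      obtain ⟨d, hd, hd0⟩ := key x (hssub (Set.Ioo_subset_Icc_self hx))
      rw [hd.deriv]; exact hd0
  have hF0 : F 0 ≤ F t := hmono ⟨le_refl _, ht0⟩ ⟨ht0, le_refl _⟩ ht0
  have hμ0 : μ 0 = 1 := by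
    rw [hμdef]; simp [Real.one_rpow]
  have hG0 : G 0 = 0 := by rw [hGdef]; simp
  have hF0val : F 0 = (Z₀ ^ 2)⁻¹ := by
    rw [hFdef]; simp only []; rw [hμ0, hG0, hZ0]; ring
  -- bound on G t
  have hGle : G t ≤ 2 * C * I := by
    have h1 : ∫ x in Set.Ioc 0 t, h x ≤ I := by
      rw [hI]
      apply setIntegral_mono_set hInt
      · exact Filter.eventually_of_mem (self_mem_ae_restrict measurableSet_Ioi)
          (fun s hs => hnonneg s (le_of_lt hs))
      · exact Filter.Eventually.of_forall (fun x hx => Set.Ioc_subset_Ioi_self hx)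
    have h2 : G t = 2 * C * ∫ x in Set.Ioc 0 t, h x := by
      rw [hGdef]
      simp only []
      rw [intervalIntegral.integral_const_mul, intervalIntegral.integral_of_le ht0]
    rw [h2]
    exact mul_le_mul_of_nonneg_left h1 (by linarith)
  -- conclude: δ ≤ ((Z t)^2)⁻¹ * μ t
  have hμt : δ ≤ ((Z t) ^ 2)⁻¹ * μ t := by
    have h2 := hF0
    rw [hF0val] at h2
    have h3 : F t = ((Z t) ^ 2)⁻¹ * μ t + G t := rfl
    rw [h3] at h2
    rw [hδ]; linarith
  have hut : (0:ℝ) < 1 + t := by linarith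
  have hzt : 0 < Z t := hZpos t ht
  have hμtpos : 0 < μ t := by
    rw [hμdef]
    exact mul_pos (Real.rpow_pos_of_pos hut _) (Real.exp_pos _)
  have hμtle : μ t ≤ (1 + t) ^ (-(2 * b)) * Real.exp c := by
    rw [hμdef]
    simp only []
    apply mul_le_mul_of_nonneg_left _ (Real.rpow_nonneg hut.le _)
    apply Real.exp_le_exp.mpr
    have : (0:ℝ) ≤ (1 + t) ^ (-ε) := Real.rpow_nonneg hut.le _
    nlinarith
  -- Z t ^ 2 ≤ (exp c / δ) * (1+t)^(-(2b))
  have hyt : 0 < ((Z t) ^ 2)⁻¹ := by positivity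
  have hP : 0 < (1 + t) ^ (-(2 * b)) := Real.rpow_pos_of_pos hut _
  have hsq : Z t ^ 2 ≤ Real.exp c / δ * (1 + t) ^ (-(2 * b)) := by
    have h1 : δ ≤ ((Z t) ^ 2)⁻¹ * ((1 + t) ^ (-(2 * b)) * Real.exp c) :=
      le_trans hμt (mul_le_mul_of_nonneg_left hμtle hyt.le)
    have h2 : Z t ^ 2 * ((Z t) ^ 2)⁻¹ = 1 := mul_inv_cancel₀ (by positivity)
    have h3 : Z t ^ 2 * δ ≤ (1 + t) ^ (-(2 * b)) * Real.exp c := by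
      calc Z t ^ 2 * δ ≤ Z t ^ 2 * (((Z t) ^ 2)⁻¹ * ((1 + t) ^ (-(2 * b)) * Real.exp c)) :=
            mul_le_mul_of_nonneg_left h1 (by positivity)
        _ = (1 + t) ^ (-(2 * b)) * Real.exp c := by rw [← mul_assoc, h2, one_mul]
    rw [div_mul_eq_mul_div, le_div_iff₀ hδpos]
    linarith [h3]
  -- finish with square roots
  have hK0 : 0 ≤ Real.sqrt (Real.exp c / δ) := Real.sqrt_nonneg _
  have hrb : (0:ℝ) ≤ (1 + t) ^ (-b) := Real.rpow_nonneg hut.le _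
  have hRHS : (Real.sqrt (Real.exp c / δ) * (1 + t) ^ (-b)) ^ 2
      = Real.exp c / δ * (1 + t) ^ (-(2 * b)) := by
    rw [mul_pow, Real.sq_sqrt (by positivity), ← Real.rpow_natCast ((1+t) ^ (-b)) 2,
      ← Real.rpow_mul hut.le]
    congr 1
    push_cast
    ring
  calc Z t = Real.sqrt (Z t ^ 2) := (Real.sqrt_sq hzt.le).symm
    _ ≤ Real.sqrt ((Real.sqrt (Real.exp c / δ) * (1 + t) ^ (-b)) ^ 2) := by
        apply Real.sqrt_le_sqrt; rw [hRHS]; exact hsq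
    _ = Real.sqrt (Real.exp c / δ) * (1 + t) ^ (-b) := Real.sqrt_sq (by positivity)
end
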